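/- Let Θ₁, Θ₂ be Young functions and θ₁ ∈ G_{θ₁}, θ₂ ∈ G_{θ₂}. If there exists C > 0 such that ‖f‖_{wM_{θ₁,Θ₁}(ℝⁿ)} ≤ C‖f‖_{wM_{θ₂,Θ₂}(ℝⁿ)} for every f ∈ wM_{θ₂,Θ₂}(ℝⁿ), then there exists C' > 0 with θ₂(t) ≤ C'θ₁(t) for all t > 0. -/

import Mathlib

open MeasureTheory Metric Set ENNReal

noncomputable section

/-- A Young function: convex, continuous, vanishing at 0, nonnegative, tending to ∞. -/
def IsYoung (Θ : ℝ → ℝ) : Prop :=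
  ConvexOn ℝ (Set.Ici 0) Θ ∧ ContinuousOn Θ (Set.Ici 0) ∧ Θ 0 = 0 ∧
  (∀ t, 0 ≤ t → 0 ≤ Θ t) ∧ Filter.Tendsto Θ Filter.atTop Filter.atTop

/-- Generalized inverse Θ⁻¹(s) = inf {r ≥ 0 : Θ r > s}. -/
def invY (Θ : ℝ → ℝ) (s : ℝ) : ℝ := sInf {r : ℝ | 0 ≤ r ∧ s < Θ r}

abbrev En (n : ℕ) := EuclideanSpace ℝ (Fin n)

/-- Luxemburg norm on a set B. -/
def luxNorm {n : ℕ} (Θ : ℝ → ℝ) (B : Set (En n)) (f : En n → ℝ) : ℝ≥0∞ :=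
  sInf {e : ℝ≥0∞ | ∃ b : ℝ, 0 < b ∧ e = ENNReal.ofReal b ∧
    ∫⁻ x in B, ENNReal.ofReal (Θ (|f x| / b)) ∂volume ≤ 1}

/-- Weak Luxemburg quasi-norm on a set B. -/
def wLuxNorm {n : ℕ} (Θ : ℝ → ℝ) (B : Set (En n)) (f : En n → ℝ) : ℝ≥0∞ :=
  sInf {e : ℝ≥0∞ | ∃ b : ℝ, 0 < b ∧ e = ENNReal.ofReal b ∧
    ∀ t : ℝ, 0 < t → ENNReal.ofReal (Θ t) * volume {x ∈ B | t < |f x| / b} ≤ 1}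

/-- Orlicz–Morrey norm (Deringoz–Guliyev–Samko). -/
def morreyNorm (n : ℕ) (θ Θ : ℝ → ℝ) (f : En n → ℝ) : ℝ≥0∞ :=
  ⨆ (a : En n) (r : ℝ) (_ : 0 < r),
    ENNReal.ofReal ((1 / θ ((volume (ball a r)).toReal ^ ((1:ℝ)/n))) *
      invY Θ (1 / (volume (ball a r)).toReal)) * luxNorm Θ (ball a r) f

/-- Weak Orlicz–Morrey quasi-norm. -/
def wMorreyNorm (n : ℕ) (θ Θ : ℝ → ℝ) (f : En n → ℝ) : ℝ≥0∞ :=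
  ⨆ (a : En n) (r : ℝ) (_ : 0 < r),
    ENNReal.ofReal ((1 / θ ((volume (ball a r)).toReal ^ ((1:ℝ)/n))) *
      invY Θ (1 / (volume (ball a r)).toReal)) * wLuxNorm Θ (ball a r) f

/-- The class G_θ : θ positive and decreasing, with t ↦ Θ⁻¹(t^{-n})/θ(t) almost decreasing. -/
def Gclass (n : ℕ) (Θ θ : ℝ → ℝ) : Prop :=
  (∀ t : ℝ, 0 < t → 0 < θ t) ∧
  (∀ s t : ℝ, 0 < s → s ≤ t → θ t ≤ θ s) ∧
  ∃ C : ℝ, 0 < C ∧ ∀ s t : ℝ, 0 < s → s ≤ t →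
    invY Θ (t ^ (-(n:ℝ))) / θ t ≤ C * (invY Θ (s ^ (-(n:ℝ))) / θ s)

/-- Θ₁ ≺ Θ₂. -/
def prec (Θ₁ Θ₂ : ℝ → ℝ) : Prop := ∃ C : ℝ, 0 < C ∧ ∀ t : ℝ, 0 < t → Θ₁ t ≤ Θ₂ (C * t)

/-- Θ₁⁻¹ ≲ Θ₂⁻¹. -/
def invLesssim (Θ₁ Θ₂ : ℝ → ℝ) : Prop :=
  ∃ C : ℝ, 0 < C ∧ ∀ t : ℝ, 0 < t → invY Θ₁ t ≤ C * invY Θ₂ t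


section Aux

private lemma young_mono {Θ : ℝ → ℝ} (hΘ : IsYoung Θ) {a b : ℝ} (ha : 0 ≤ a) (hab : a ≤ b) :
    Θ a ≤ Θ b := by
  rcases eq_or_lt_of_le hab with rfl | hlt
  · exact le_refl _
  have hb : 0 < b := lt_of_le_of_lt ha hlt
  have h0 : Θ 0 = 0 := hΘ.2.2.1
  have hw2 : (0:ℝ) ≤ 1 - a / b := by
    rw [sub_nonneg]
    exact (div_le_one hb).mpr hab
  have hcomb := hΘ.1.2 (Set.mem_Ici.mpr hb.le) (Set.mem_Ici.mpr (le_refl (0:ℝ)))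
    (div_nonneg ha hb.le) hw2 (by ring)
  have hab' : (a / b) • b + (1 - a / b) • (0:ℝ) = a := by
    simp only [smul_eq_mul, mul_zero, add_zero]
    field_simp
  rw [hab'] at hcomb
  have hΘb : 0 ≤ Θ b := hΘ.2.2.2.1 b hb.le
  have hle1 : a / b ≤ 1 := (div_le_one hb).mpr hab
  calc Θ a ≤ (a / b) * Θ b + (1 - a / b) * Θ 0 := hcomb
    _ = (a / b) * Θ b := by rw [h0]; ring
    _ ≤ 1 * Θ b := mul_le_mul_of_nonneg_right hle1 hΘb
    _ = Θ b := one_mul _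

private lemma invY_setne {Θ : ℝ → ℝ} (hΘ : IsYoung Θ) (s : ℝ) :
    {r : ℝ | 0 ≤ r ∧ s < Θ r}.Nonempty := by
  obtain ⟨r, hr1, hr2⟩ :=
    ((hΘ.2.2.2.2.eventually_gt_atTop s).and (Filter.eventually_ge_atTop (0:ℝ))).exists
  exact ⟨r, hr2, hr1⟩

private lemma invY_bdd (Θ : ℝ → ℝ) (s : ℝ) :
    BddBelow {r : ℝ | 0 ≤ r ∧ s < Θ r} :=
  ⟨0, fun x hx => hx.1⟩

private lemma invY_nonneg {Θ : ℝ → ℝ} (hΘ : IsYoung Θ) (s : ℝ) : 0 ≤ invY Θ s :=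
  le_csInf (invY_setne hΘ s) fun r hr => hr.1

private lemma invY_pos {Θ : ℝ → ℝ} (hΘ : IsYoung Θ) {s : ℝ} (hs : 0 < s) : 0 < invY Θ s := by
  have hc : ContinuousWithinAt Θ (Set.Ici 0) 0 := hΘ.2.1 0 Set.self_mem_Ici
  have h0 : Θ 0 = 0 := hΘ.2.2.1
  have hc' : Filter.Tendsto Θ (nhdsWithin 0 (Set.Ici 0)) (nhds 0) := by
    have := hc.tendsto; rwa [h0] at this
  have hev : ∀ᶠ x in nhdsWithin 0 (Set.Ici 0), Θ x < s := hc'.eventually_lt_const hs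
  obtain ⟨ε, hε, hsub⟩ := Metric.mem_nhdsWithin_iff.mp hev
  refine lt_of_lt_of_le hε (le_csInf (invY_setne hΘ s) fun ρ hρ => ?_)
  by_contra hcon
  push_neg at hcon
  have hmem : ρ ∈ Metric.ball (0:ℝ) ε ∩ Set.Ici 0 := by
    constructor
    · simp only [Metric.mem_ball, Real.dist_eq, sub_zero, abs_of_nonneg hρ.1]
      exact hcon
    · exact hρ.1
  have := hsub hmem
  simp only [Set.mem_setOf_eq] at this
  linarith [hρ.2]

private lemma invY_lt_imp {Θ : ℝ → ℝ} {s u : ℝ} (hu : 0 ≤ u) (hlt : u < invY Θ s) :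
    Θ u ≤ s := by
  by_contra hgt
  push_neg at hgt
  exact absurd (csInf_le (invY_bdd Θ s) ⟨hu, hgt⟩) (not_le.mpr hlt)

end Aux

theorem stmt11 (n : ℕ) (hn : 0 < n) (Θ₁ Θ₂ θ₁ θ₂ : ℝ → ℝ)
    (hΘ₁ : IsYoung Θ₁) (hΘ₂ : IsYoung Θ₂)
    (hθ₁ : Gclass n Θ₁ θ₁) (hθ₂ : Gclass n Θ₂ θ₂)
    (C : ℝ) (hC : 0 < C)
    (h : ∀ f : En n → ℝ, Measurable f →
      wMorreyNorm n θ₁ Θ₁ f ≤ ENNReal.ofReal C * wMorreyNorm n θ₂ Θ₂ f) :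
    ∃ C' : ℝ, 0 < C' ∧ ∀ t : ℝ, 0 < t → θ₂ t ≤ C' * θ₁ t := by
  classical
  -- extract the structure data
  obtain ⟨hθ1pos, hθ1dec, _⟩ := hθ₁
  obtain ⟨hθ2pos, hθ2dec, Cg, hCg, hG⟩ := hθ₂
  haveI hNT : Nontrivial (En n) :=
    ⟨⟨0, EuclideanSpace.single ⟨0, hn⟩ 1, by
      intro hcontra
      have := congrArg (fun v : En n => v ⟨0, hn⟩) hcontra.symm
      simp [EuclideanSpace.single] at this⟩⟩
  set ω : ℝ := (volume (ball (0 : En n) 1)).toReal with hωdef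
  have hωpos : 0 < ω :=
    ENNReal.toReal_pos (measure_ball_pos volume (0 : En n) one_pos).ne' measure_ball_lt_top.ne
  have hnR : (0:ℝ) < (n:ℝ) := by exact_mod_cast hn
  have hvol : ∀ (a : En n) (r : ℝ), 0 ≤ r → (volume (ball a r)).toReal = r ^ n * ω := by
    intro a r hr
    rw [MeasureTheory.Measure.addHaar_ball volume a hr, finrank_euclideanSpace_fin,
      ENNReal.toReal_mul, ENNReal.toReal_ofReal (by positivity)]
  have hvpos : ∀ (a : En n) (r : ℝ), 0 < r → 0 < (volume (ball a r)).toReal := by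
    intro a r hr
    exact ENNReal.toReal_pos (measure_ball_pos volume a hr).ne' measure_ball_lt_top.ne
  have hs : ∀ (a : En n) (r : ℝ), 0 < r →
      ((volume (ball a r)).toReal) ^ ((1:ℝ)/n) = r * ω ^ ((1:ℝ)/n) := by
    intro a r hr
    rw [hvol a r hr.le, Real.mul_rpow (by positivity) hωpos.le, ← Real.rpow_natCast r n,
      ← Real.rpow_mul hr.le]
    rw [mul_one_div, div_self hnR.ne', Real.rpow_one]
  have hpowinv : ∀ w : ℝ, 0 < w → (w ^ ((1:ℝ)/n)) ^ (-(n:ℝ)) = 1 / w := by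
    intro w hw
    rw [← Real.rpow_mul hw.le]
    have : (1:ℝ)/n * (-(n:ℝ)) = -1 := by field_simp
    rw [this, Real.rpow_neg_one, one_div]
  refine ⟨C * max Cg 1, by positivity, fun t ht => ?_⟩
  set r₀ : ℝ := t * ω ^ (-(1:ℝ)/(n:ℝ)) with hr₀def
  have hr₀pos : 0 < r₀ := mul_pos ht (Real.rpow_pos_of_pos hωpos _)
  set B₀ : Set (En n) := ball (0 : En n) r₀ with hB₀def
  set v₀ : ℝ := (volume B₀).toReal with hv₀def
  have hv₀pos : 0 < v₀ := hvpos 0 r₀ hr₀pos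
  have hst : v₀ ^ ((1:ℝ)/n) = t := by
    rw [hv₀def, hB₀def, hs 0 r₀ hr₀pos, hr₀def, mul_assoc, ← Real.rpow_add hωpos]
    have : -(1:ℝ)/(n:ℝ) + 1/(n:ℝ) = 0 := by ring
    rw [this, Real.rpow_zero, mul_one]
  have hB₀zero : volume B₀ ≠ ⊤ := measure_ball_lt_top.ne
  -- the test function
  set f : En n → ℝ := B₀.indicator (fun _ => (1:ℝ)) with hfdef
  have hf : Measurable f := measurable_const.indicator measurableSet_ball
  have hfabs : ∀ x, |f x| ≤ 1 := by
    intro x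
    by_cases hx : x ∈ B₀
    · rw [hfdef, Set.indicator_of_mem hx]; norm_num
    · rw [hfdef, Set.indicator_of_notMem hx]; norm_num
  set I₁ : ℝ := invY Θ₁ (1/v₀) with hI₁def
  have hI₁pos : 0 < I₁ := invY_pos hΘ₁ (by positivity)
  have hθ1t : 0 < θ₁ t := hθ1pos t ht
  have hθ2t : 0 < θ₂ t := hθ2pos t ht
  -- ============ lower bound for the θ₁ norm ============
  have h1 : ENNReal.ofReal (1 / I₁) ≤ wLuxNorm Θ₁ B₀ f := by
    apply le_sInf
    rintro e ⟨b, hb, rfl, hprop⟩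
    apply ENNReal.ofReal_le_ofReal
    have hlb : 1 / b ≤ I₁ := by
      apply le_csInf (invY_setne hΘ₁ _)
      rintro ρ ⟨hρ0, hρΘ⟩
      have hρpos : 0 < ρ := by
        rcases eq_or_lt_of_le hρ0 with rfl | h
        · rw [hΘ₁.2.2.1] at hρΘ
          exact absurd hρΘ (not_lt.mpr (by positivity))
        · exact h
      by_contra hcon
      push_neg at hcon
      have hprop' := hprop ρ hρpos
      have hset : {x ∈ B₀ | ρ < |f x| / b} = B₀ := by
        ext x
        simp only [Set.mem_setOf_eq, and_iff_left_iff_imp]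
        intro hx
        rw [hfdef, Set.indicator_of_mem hx, abs_one]
        exact hcon
      rw [hset] at hprop'
      have hvol₀ : volume B₀ = ENNReal.ofReal v₀ :=
        (ENNReal.ofReal_toReal hB₀zero).symm
      rw [hvol₀, ← ENNReal.ofReal_mul (hΘ₁.2.2.2.1 ρ hρ0)] at hprop'
      have hle1 : Θ₁ ρ * v₀ ≤ 1 := ENNReal.ofReal_le_one.mp hprop'
      have : 1 < Θ₁ ρ * v₀ := by
        have := (div_lt_iff₀ hv₀pos).mp hρΘ
        linarith
      linarith
    -- from 1/b ≤ I₁ deduce 1/I₁ ≤ b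
    rw [div_le_iff₀ hI₁pos]
    have := mul_le_mul_of_nonneg_left hlb hb.le
    rw [mul_one_div, div_self hb.ne'] at this
    linarith [mul_comm b I₁ ▸ this]
  have hlow : ENNReal.ofReal (1 / θ₁ t) ≤ wMorreyNorm n θ₁ Θ₁ f := by
    have hterm : ENNReal.ofReal (1 / θ₁ t) ≤
        ENNReal.ofReal ((1 / θ₁ ((volume (ball (0:En n) r₀)).toReal ^ ((1:ℝ)/n))) *
          invY Θ₁ (1 / (volume (ball (0:En n) r₀)).toReal)) * wLuxNorm Θ₁ (ball (0:En n) r₀) f := by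
      have hrw : (volume (ball (0:En n) r₀)).toReal = v₀ := rfl
      rw [hrw, hst]
      calc ENNReal.ofReal (1 / θ₁ t)
          = ENNReal.ofReal ((1 / θ₁ t * I₁) * (1 / I₁)) := by
            rw [mul_assoc, mul_one_div, div_self hI₁pos.ne', mul_one]
        _ = ENNReal.ofReal (1 / θ₁ t * I₁) * ENNReal.ofReal (1 / I₁) := by
            rw [ENNReal.ofReal_mul (mul_nonneg (by positivity) (invY_nonneg hΘ₁ _))]
        _ ≤ ENNReal.ofReal (1 / θ₁ t * I₁) * wLuxNorm Θ₁ B₀ f := mul_le_mul_right h1 _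
    rw [wMorreyNorm]
    exact le_trans hterm (le_iSup_of_le (0 : En n) (le_iSup_of_le r₀ (le_iSup_of_le hr₀pos le_rfl)))
  -- ============ upper bound for the θ₂ norm ============
  have hupp : wMorreyNorm n θ₂ Θ₂ f ≤ ENNReal.ofReal (max Cg 1 / θ₂ t) := by
    rw [wMorreyNorm]
    refine iSup_le fun a => iSup_le fun r => iSup_le fun hr => ?_
    set v : ℝ := (volume (ball a r)).toReal with hvdef
    have hvp : 0 < v := hvpos a r hr
    set m : ℝ := min v v₀ with hmdef
    have hmpos : 0 < m := lt_min hvp hv₀pos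
    set I : ℝ := invY Θ₂ (1/m) with hIdef
    have hIpos : 0 < I := invY_pos hΘ₂ (by positivity)
    have hvol_le : volume (ball a r ∩ B₀) ≤ ENNReal.ofReal m := by
      rcases le_total v v₀ with hle | hle
      · rw [hmdef, min_eq_left hle, hvdef, ENNReal.ofReal_toReal measure_ball_lt_top.ne]
        exact measure_mono Set.inter_subset_left
      · rw [hmdef, min_eq_right hle, hv₀def, ENNReal.ofReal_toReal hB₀zero]
        exact measure_mono Set.inter_subset_right
    have hwl : wLuxNorm Θ₂ (ball a r) f ≤ ENNReal.ofReal (1/I) := by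
      apply sInf_le
      refine ⟨1/I, by positivity, rfl, fun u hu => ?_⟩
      by_cases hcase : u < I
      · have hΘu : Θ₂ u ≤ 1/m := invY_lt_imp hu.le hcase
        have hsub : {x ∈ ball a r | u < |f x| / (1/I)} ⊆ ball a r ∩ B₀ := by
          rintro x ⟨hx1, hx2⟩
          refine ⟨hx1, ?_⟩
          by_contra hxB
          rw [hfdef, Set.indicator_of_notMem hxB] at hx2
          simp only [abs_zero, zero_div] at hx2
          linarith
        calc ENNReal.ofReal (Θ₂ u) * volume {x ∈ ball a r | u < |f x| / (1/I)}
            ≤ ENNReal.ofReal (1/m) * ENNReal.ofReal m :=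
              mul_le_mul' (ENNReal.ofReal_le_ofReal hΘu) (le_trans (measure_mono hsub) hvol_le)
          _ = ENNReal.ofReal (1/m * m) := (ENNReal.ofReal_mul (by positivity)).symm
          _ ≤ 1 := by rw [one_div_mul_cancel hmpos.ne']; simp
      · push_neg at hcase
        have hempty : {x ∈ ball a r | u < |f x| / (1/I)} = (∅ : Set (En n)) := by
          ext x
          simp only [Set.mem_setOf_eq, Set.mem_empty_iff_false, iff_false, not_and, not_lt]
          intro _
          calc |f x| / (1/I) = |f x| * I := by rw [one_div, div_eq_mul_inv, inv_inv]
            _ ≤ 1 * I := mul_le_mul_of_nonneg_right (hfabs x) hIpos.le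
            _ = I := one_mul I
            _ ≤ u := hcase
        rw [hempty, measure_empty, mul_zero]
        exact zero_le_one
    -- the coefficient estimate
    have hsv : v ^ ((1:ℝ)/n) = r * ω ^ ((1:ℝ)/n) := hs a r hr
    have hsvpos : 0 < v ^ ((1:ℝ)/n) := Real.rpow_pos_of_pos hvp _
    have htval : t = r₀ * ω ^ ((1:ℝ)/n) := by
      rw [← hst, hv₀def, hB₀def, hs 0 r₀ hr₀pos]
    have key : (1 / θ₂ (v ^ ((1:ℝ)/n))) * invY Θ₂ (1/v) * (1/I) ≤ max Cg 1 / θ₂ t := by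
      rcases le_total r r₀ with hrr | hrr
      · -- small radius: m = v
        have hvv : v ≤ v₀ := by
          rw [hvdef, hv₀def, hB₀def, hvol a r hr.le, hvol 0 r₀ hr₀pos.le]
          have : r ^ n ≤ r₀ ^ n := pow_le_pow_left₀ hr.le hrr n
          nlinarith
        have hmv : m = v := by rw [hmdef]; exact min_eq_left hvv
        have hIv : I = invY Θ₂ (1/v) := by rw [hIdef, hmv]
        rw [← hIv, mul_assoc, mul_one_div, div_self hIpos.ne', mul_one]
        have hsvt : v ^ ((1:ℝ)/n) ≤ t := by
          rw [hsv, htval]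
          exact mul_le_mul_of_nonneg_right hrr (Real.rpow_pos_of_pos hωpos _).le
        have hmono : θ₂ t ≤ θ₂ (v ^ ((1:ℝ)/n)) := hθ2dec _ _ hsvpos hsvt
        have h1' : 1 / θ₂ (v ^ ((1:ℝ)/n)) ≤ 1 / θ₂ t :=
          one_div_le_one_div_of_le hθ2t hmono
        have h2' : 1 / θ₂ t ≤ max Cg 1 / θ₂ t := by
          gcongr
          exact le_max_right Cg 1
        linarith
      · -- big radius: m = v₀
        have hvv : v₀ ≤ v := by
          rw [hvdef, hv₀def, hB₀def, hvol a r hr.le, hvol 0 r₀ hr₀pos.le]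
          have : r₀ ^ n ≤ r ^ n := pow_le_pow_left₀ hr₀pos.le hrr n
          nlinarith
        have hmv : m = v₀ := by rw [hmdef]; exact min_eq_right hvv
        have hIv : I = invY Θ₂ (1/v₀) := by rw [hIdef, hmv]
        have htsv : t ≤ v ^ ((1:ℝ)/n) := by
          rw [hsv, htval]
          exact mul_le_mul_of_nonneg_right hrr (Real.rpow_pos_of_pos hωpos _).le
        have hGle := hG t (v ^ ((1:ℝ)/n)) ht htsv
        rw [hpowinv v hvp] at hGle
        have htpow : t ^ (-(n:ℝ)) = 1 / v₀ := by
          rw [← hst]; exact hpowinv v₀ hv₀pos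
        rw [htpow, ← hIv] at hGle
        -- hGle : invY Θ₂ (1/v) / θ₂ (v^{1/n}) ≤ Cg * (I / θ₂ t)
        have hθ2sv : 0 < θ₂ (v ^ ((1:ℝ)/n)) := hθ2pos _ hsvpos
        have heq : (1 / θ₂ (v ^ ((1:ℝ)/n))) * invY Θ₂ (1/v) * (1/I)
            = (invY Θ₂ (1/v) / θ₂ (v ^ ((1:ℝ)/n))) / I := by ring
        rw [heq]
        have hstep : (invY Θ₂ (1/v) / θ₂ (v ^ ((1:ℝ)/n))) / I ≤ (Cg * (I / θ₂ t)) / I := by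
          gcongr
        have heq2 : (Cg * (I / θ₂ t)) / I = Cg / θ₂ t := by
          field_simp
        have hfin : Cg / θ₂ t ≤ max Cg 1 / θ₂ t := by
          gcongr
          exact le_max_left Cg 1
        rw [heq2] at hstep
        linarith
    have hcoef : 0 ≤ (1 / θ₂ (v ^ ((1:ℝ)/n))) * invY Θ₂ (1/v) :=
      mul_nonneg (one_div_nonneg.mpr (hθ2pos _ hsvpos).le) (invY_nonneg hΘ₂ _)
    calc ENNReal.ofReal ((1 / θ₂ (v ^ ((1:ℝ)/n))) * invY Θ₂ (1/v)) * wLuxNorm Θ₂ (ball a r) f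
        ≤ ENNReal.ofReal ((1 / θ₂ (v ^ ((1:ℝ)/n))) * invY Θ₂ (1/v)) * ENNReal.ofReal (1/I) :=
          mul_le_mul_right hwl _
      _ = ENNReal.ofReal ((1 / θ₂ (v ^ ((1:ℝ)/n))) * invY Θ₂ (1/v) * (1/I)) :=
          (ENNReal.ofReal_mul hcoef).symm
      _ ≤ ENNReal.ofReal (max Cg 1 / θ₂ t) := ENNReal.ofReal_le_ofReal key
  -- ============ combine ============
  have hchain : ENNReal.ofReal (1 / θ₁ t) ≤ ENNReal.ofReal (C * (max Cg 1 / θ₂ t)) := by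
    calc ENNReal.ofReal (1 / θ₁ t) ≤ wMorreyNorm n θ₁ Θ₁ f := hlow
      _ ≤ ENNReal.ofReal C * wMorreyNorm n θ₂ Θ₂ f := h f hf
      _ ≤ ENNReal.ofReal C * ENNReal.ofReal (max Cg 1 / θ₂ t) := mul_le_mul_right hupp _
      _ = ENNReal.ofReal (C * (max Cg 1 / θ₂ t)) := (ENNReal.ofReal_mul hC.le).symm
  have hrhs : 0 ≤ C * (max Cg 1 / θ₂ t) :=
    mul_nonneg hC.le (div_nonneg (le_trans zero_le_one (le_max_right Cg 1)) hθ2t.le)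
  have hreal : 1 / θ₁ t ≤ C * (max Cg 1 / θ₂ t) :=
    (ENNReal.ofReal_le_ofReal_iff hrhs).mp hchain
  have hreal' : 1 / θ₁ t ≤ (C * max Cg 1) / θ₂ t := by
    have : C * (max Cg 1 / θ₂ t) = (C * max Cg 1) / θ₂ t := by ring
    linarith [this ▸ hreal]
  have := (div_le_div_iff₀ hθ1t hθ2t).mp hreal'
  linarith
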